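/- Let (X₁,Y₁), (X₂,Y₂) be i.i.d. random vectors with generic (X,Y) bivariate Sarmanov, F ∈ 𝒟 and G̅(x) = o(F̅(x)). Denote H̅(x) = P[XY > x] and H̃(v) = sup_{x>0} H̅(x/v)/H̅(x). If ∫₀^∞ H̃(v) G(dv) < ∞, then P[X₁Y₁ > x, X₂Y₂Y₁ > x] = o(P[X₁Y₁ > x]) as x → ∞. -/

import Mathlib

open MeasureTheory Set Filter
open scoped ENNReal Topology

/-- For i.i.d. bivariate Sarmanov vectors `(X₁,Y₁), (X₂,Y₂)` with `F ∈ 𝒟`,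
`Ḡ = o(F̄)` and `∫ H̃ dG < ∞`, the joint tail
`P[X₁Y₁ > x, X₂Y₂Y₁ > x]` is `o(P[X₁Y₁ > x])`. -/
theorem joint_tail_negligible
    {Ω : Type*} [MeasurableSpace Ω] (P : Measure Ω) [IsProbabilityMeasure P]
    (X₁ Y₁ X₂ Y₂ : Ω → ℝ)
    (hX₁ : Measurable X₁) (hY₁ : Measurable Y₁)
    (hX₂ : Measurable X₂) (hY₂ : Measurable Y₂)
    (hY₁pos : ∀ ω, 0 < Y₁ ω) (hY₂pos : ∀ ω, 0 < Y₂ ω)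
    (φ₁ φ₂ : ℝ → ℝ) (hφ₁ : Measurable φ₁) (hφ₂ : Measurable φ₂) (θ b₁ b₂ : ℝ)
    (hb₁ : ∀ x, |φ₁ x| ≤ b₁) (hb₂ : ∀ y, |φ₂ y| ≤ b₂)
    (hmean1 : ∫ ω, φ₁ (X₁ ω) ∂P = 0) (hmean2 : ∫ ω, φ₂ (Y₁ ω) ∂P = 0)
    -- generic Sarmanov joint law of each pair
    (hjoint1 : P.map (fun ω => (X₁ ω, Y₁ ω)) =
      ((P.map X₁).prod (P.map Y₁)).withDensity
        (fun p => ENNReal.ofReal (1 + θ * φ₁ p.1 * φ₂ p.2)))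
    -- the two pairs are i.i.d.
    (hid : P.map (fun ω => (X₂ ω, Y₂ ω)) = P.map (fun ω => (X₁ ω, Y₁ ω)))
    (hindep : ProbabilityTheory.IndepFun
      (fun ω => (X₁ ω, Y₁ ω)) (fun ω => (X₂ ω, Y₂ ω)) P)
    -- F ∈ 𝒟
    (hD : ∀ y : ℝ, 0 < y → y < 1 →
      ∃ C : ℝ, ∀ᶠ x in atTop,
        (P {ω | X₁ ω > x * y}).toReal ≤ C * (P {ω | X₁ ω > x}).toReal)
    -- Ḡ = o(F̄)
    (hGF : (fun x => (P {ω | Y₁ ω > x}).toReal) =o[atTop]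
      fun x => (P {ω | X₁ ω > x}).toReal)
    -- H̃(v) = sup_{x>0} H̄(x/v)/H̄(x) is well defined with ∫ H̃ dG < ∞
    (Htilde : ℝ → ℝ)
    (hHt : ∀ v : ℝ, 0 < v → Htilde v =
      sSup {r : ℝ | ∃ x : ℝ, 0 < x ∧
        r = (P {ω | X₁ ω * Y₁ ω > x / v}).toReal / (P {ω | X₁ ω * Y₁ ω > x}).toReal})
    (hHtBdd : ∀ v : ℝ, 0 < v → BddAbove {r : ℝ | ∃ x : ℝ, 0 < x ∧
        r = (P {ω | X₁ ω * Y₁ ω > x / v}).toReal / (P {ω | X₁ ω * Y₁ ω > x}).toReal})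
    (hHtInt : ∫⁻ v, ENNReal.ofReal (Htilde v) ∂(P.map Y₁) < ⊤) :
    (fun x => (P {ω | X₁ ω * Y₁ ω > x ∧ X₂ ω * Y₂ ω * Y₁ ω > x}).toReal) =o[atTop]
      fun x => (P {ω | X₁ ω * Y₁ ω > x}).toReal := by
  classical
  set Hb : ℝ → ℝ≥0∞ := fun t => P {ω | X₁ ω * Y₁ ω > t} with hHbdef
  have hXY₁ : Measurable fun ω => X₁ ω * Y₁ ω := hX₁.mul hY₁
  have hHbSet : ∀ t : ℝ, MeasurableSet {ω | X₁ ω * Y₁ ω > t} := fun t =>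
    measurableSet_lt measurable_const hXY₁
  have hHbAnti : Antitone Hb := fun s t hst =>
    measure_mono fun ω h => lt_of_le_of_lt hst h
  have hHbne : ∀ t, Hb t ≠ ⊤ := fun t => measure_ne_top P _
  by_cases hzero : ∃ t : ℝ, Hb t = 0
  · -- trivial case: the tail vanishes somewhere
    obtain ⟨t₀, ht₀⟩ := hzero
    rw [Asymptotics.isLittleO_iff]
    intro c hc
    filter_upwards [eventually_ge_atTop t₀] with x hx
    have h0 : P {ω | X₁ ω * Y₁ ω > x ∧ X₂ ω * Y₂ ω * Y₁ ω > x} = 0 := by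
      refine measure_mono_null (fun ω hω => ?_) ht₀
      exact lt_of_le_of_lt hx hω.1
    rw [h0]
    simp only [ENNReal.toReal_zero, norm_zero]
    positivity
  push_neg at hzero
  -- main case: Hb t ≠ 0 for all t
  have hpair₁ : Measurable fun ω => (X₁ ω, Y₁ ω) := hX₁.prodMk hY₁
  have hpair₂ : Measurable fun ω => (X₂ ω, Y₂ ω) := hX₂.prodMk hY₂
  set μ₁ : Measure (ℝ × ℝ) := P.map (fun ω => (X₁ ω, Y₁ ω)) with hμ₁def
  have hμ₁prob : IsProbabilityMeasure μ₁ := Measure.isProbabilityMeasure_map hpair₁.aemeasurable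
  have hmul2 : Measurable fun p : ℝ × ℝ => p.1 * p.2 := measurable_fst.mul measurable_snd
  have hSx : ∀ x : ℝ, MeasurableSet {p : ℝ × ℝ | x < p.1 * p.2} := fun x =>
    measurableSet_lt measurable_const hmul2
  have htail : ∀ t : ℝ, μ₁ {p : ℝ × ℝ | t < p.1 * p.2} = Hb t := by
    intro t
    rw [hμ₁def, Measure.map_apply hpair₁ (hSx t)]
    rfl
  -- the measurable rational-sup minorant of Htilde
  set hE : ℝ → ℝ≥0∞ := fun v => ⨆ q : ℚ, if 0 < (q : ℝ) then
      ENNReal.ofReal ((Hb ((q : ℝ) / v)).toReal / (Hb (q : ℝ)).toReal) else 0 with hhEdef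
  have hHbMeas : Measurable Hb := hHbAnti.measurable
  have hEmeas : Measurable hE := by
    refine Measurable.iSup fun q => ?_
    by_cases hq : 0 < (q : ℝ)
    · simp only [hq, if_true]
      exact ENNReal.measurable_ofReal.comp
        ((ENNReal.measurable_toReal.comp
          (hHbMeas.comp (measurable_const.div measurable_id))).div_const _)
    · simp only [hq, if_false]
      exact measurable_const
  have hratio_le : ∀ v : ℝ, 0 < v → ∀ t : ℝ, 0 < t →
      (Hb (t / v)).toReal / (Hb t).toReal ≤ Htilde v := by
    intro v hv t ht
    rw [hHt v hv]
    exact le_csSup (hHtBdd v hv) ⟨t, ht, rfl⟩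
  have hEle : ∀ v : ℝ, 0 < v → hE v ≤ ENNReal.ofReal (Htilde v) := by
    intro v hv
    refine iSup_le fun q => ?_
    by_cases hq : 0 < (q : ℝ)
    · simp only [hq, if_true]
      exact ENNReal.ofReal_le_ofReal (hratio_le v hv q hq)
    · simp only [hq, if_false]
      exact zero_le
  have hEne : ∀ v : ℝ, 0 < v → hE v ≠ ⊤ := fun v hv =>
    ne_top_of_le_ne_top ENNReal.ofReal_ne_top (hEle v hv)
  -- key pointwise bound via right continuity
  have hkey : ∀ v : ℝ, 0 < v → ∀ x : ℝ, 0 < x →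
      (Hb (x / v)).toReal ≤ (hE v).toReal * (Hb x).toReal := by
    intro v hv x hx
    have hq : ∀ q : ℚ, 0 < (q : ℝ) →
        (Hb ((q : ℝ) / v)).toReal ≤ (hE v).toReal * (Hb (q : ℝ)).toReal := by
      intro q hqpos
      have h1 : ENNReal.ofReal ((Hb ((q : ℝ) / v)).toReal / (Hb (q : ℝ)).toReal) ≤ hE v := by
        have h := le_iSup (fun q' : ℚ => if 0 < (q' : ℝ) then
          ENNReal.ofReal ((Hb ((q' : ℝ) / v)).toReal / (Hb (q' : ℝ)).toReal) else 0) q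
        rwa [if_pos hqpos] at h
      have h2 : (Hb ((q : ℝ) / v)).toReal / (Hb (q : ℝ)).toReal ≤ (hE v).toReal :=
        (ENNReal.ofReal_le_iff_le_toReal (hEne v hv)).1 h1
      have hden : 0 < (Hb (q : ℝ)).toReal :=
        ENNReal.toReal_pos (hzero _) (hHbne _)
      calc (Hb ((q : ℝ) / v)).toReal
          = (Hb ((q : ℝ) / v)).toReal / (Hb (q : ℝ)).toReal * (Hb (q : ℝ)).toReal :=
            (div_mul_cancel₀ _ hden.ne').symm
        _ ≤ (hE v).toReal * (Hb (q : ℝ)).toReal :=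
            mul_le_mul_of_nonneg_right h2 ENNReal.toReal_nonneg
    set s : ℕ → Set Ω := fun n => {ω | X₁ ω * Y₁ ω > (x + 1 / ((n : ℝ) + 1)) / v} with hsdef
    have hsm : Monotone s := by
      intro m n hmn ω hω
      have h1 : (x + 1 / ((n : ℝ) + 1)) ≤ x + 1 / ((m : ℝ) + 1) := by
        have : 1 / ((n : ℝ) + 1) ≤ 1 / ((m : ℝ) + 1) := by
          apply one_div_le_one_div_of_le
          · positivity
          · exact_mod_cast Nat.succ_le_succ hmn
        linarith
      exact lt_of_le_of_lt (div_le_div_of_nonneg_right h1 hv.le) hω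
    have hsU : (⋃ n, s n) = {ω | X₁ ω * Y₁ ω > x / v} := by
      ext ω
      simp only [hsdef, mem_iUnion, mem_setOf_eq]
      constructor
      · rintro ⟨n, hn⟩
        have hpos : (0:ℝ) < 1 / ((n : ℝ) + 1) := by positivity
        have h' : x / v < (x + 1 / ((n : ℝ) + 1)) / v :=
          div_lt_div_of_pos_right (by linarith) hv
        exact lt_trans h' hn
      · intro h
        have hxv : x < X₁ ω * Y₁ ω * v := (div_lt_iff₀ hv).1 h
        obtain ⟨n, hn⟩ := exists_nat_one_div_lt (show (0:ℝ) < X₁ ω * Y₁ ω * v - x by linarith)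
        refine ⟨n, ?_⟩
        rw [gt_iff_lt, div_lt_iff₀ hv]
        linarith
    have hlim : Tendsto (fun n => (P (s n)).toReal) atTop (𝓝 ((Hb (x / v)).toReal)) := by
      have h1 : Tendsto (fun n => P (s n)) atTop (𝓝 (Hb (x / v))) := by
        have := tendsto_measure_iUnion_atTop (μ := P) hsm
        rwa [hsU] at this
      exact (ENNReal.tendsto_toReal (hHbne _)).comp h1
    refine le_of_tendsto' hlim fun n => ?_
    have hlt : x < x + 1 / ((n : ℝ) + 1) := by
      have : (0:ℝ) < 1 / ((n : ℝ) + 1) := by positivity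
      linarith
    obtain ⟨q, hq1, hq2⟩ := exists_rat_btwn hlt
    have hqpos : (0:ℝ) < (q : ℝ) := hx.trans hq1
    calc (P (s n)).toReal ≤ (Hb ((q : ℝ) / v)).toReal := by
          apply ENNReal.toReal_mono (hHbne _)
          apply measure_mono
          intro ω hω
          exact lt_trans (div_lt_div_of_pos_right hq2 hv) hω
      _ ≤ (hE v).toReal * (Hb (q : ℝ)).toReal := hq q hqpos
      _ ≤ (hE v).toReal * (Hb x).toReal := by
          apply mul_le_mul_of_nonneg_left _ ENNReal.toReal_nonneg
          exact ENNReal.toReal_mono (hHbne _) (hHbAnti hq1.le)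
  -- independence: law of the two pairs is a product
  have hprod : P.map (fun ω => ((X₁ ω, Y₁ ω), (X₂ ω, Y₂ ω))) = μ₁.prod μ₁ := by
    rw [(ProbabilityTheory.indepFun_iff_map_prod_eq_prod_map_map
      hpair₁.aemeasurable hpair₂.aemeasurable).1 hindep, hid]
  -- main pointwise estimate
  have hmain : ∀ x : ℝ, 0 < x →
      P {ω | X₁ ω * Y₁ ω > x ∧ X₂ ω * Y₂ ω * Y₁ ω > x} ≤
        (∫⁻ p in {p : ℝ × ℝ | x < p.1 * p.2}, hE p.2 ∂μ₁) * Hb x := by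
    intro x hx
    have hT : MeasurableSet {r : (ℝ × ℝ) × (ℝ × ℝ) |
        x < r.1.1 * r.1.2 ∧ x < r.2.1 * r.2.2 * r.1.2} := by
      refine MeasurableSet.inter ?_ ?_
      · exact measurableSet_lt measurable_const (measurable_fst.fst.mul measurable_fst.snd)
      · exact measurableSet_lt measurable_const
          ((measurable_snd.fst.mul measurable_snd.snd).mul measurable_fst.snd)
    have h1 : P {ω | X₁ ω * Y₁ ω > x ∧ X₂ ω * Y₂ ω * Y₁ ω > x}
        = (μ₁.prod μ₁) {r : (ℝ × ℝ) × (ℝ × ℝ) |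
            x < r.1.1 * r.1.2 ∧ x < r.2.1 * r.2.2 * r.1.2} := by
      rw [← hprod, Measure.map_apply (hpair₁.prodMk hpair₂) hT]
      rfl
    rw [h1, Measure.prod_apply hT]
    have hae : ∀ᵐ p ∂μ₁, 0 < p.2 := by
      rw [hμ₁def, ae_map_iff hpair₁.aemeasurable
        (measurableSet_lt measurable_const measurable_snd)]
      exact Eventually.of_forall fun ω => hY₁pos ω
    have hbound : ∀ᵐ p ∂μ₁, μ₁ (Prod.mk p ⁻¹' {r : (ℝ × ℝ) × (ℝ × ℝ) |
          x < r.1.1 * r.1.2 ∧ x < r.2.1 * r.2.2 * r.1.2})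
        ≤ ({p : ℝ × ℝ | x < p.1 * p.2}).indicator (fun p => hE p.2 * Hb x) p := by
      filter_upwards [hae] with p hp
      by_cases hpx : x < p.1 * p.2
      · have hset : Prod.mk p ⁻¹' {r : (ℝ × ℝ) × (ℝ × ℝ) |
            x < r.1.1 * r.1.2 ∧ x < r.2.1 * r.2.2 * r.1.2}
            = {q : ℝ × ℝ | x / p.2 < q.1 * q.2} := by
          ext q
          simp only [mem_preimage, mem_setOf_eq]
          constructor
          · rintro ⟨-, h2⟩
            exact (div_lt_iff₀ hp).2 h2
          · intro h
            exact ⟨hpx, (div_lt_iff₀ hp).1 h⟩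
        rw [hset, htail (x / p.2)]
        have hmem : p ∈ {p : ℝ × ℝ | x < p.1 * p.2} := hpx
        rw [indicator_of_mem hmem]
        have hr := hkey p.2 hp x hx
        calc Hb (x / p.2) = ENNReal.ofReal (Hb (x / p.2)).toReal :=
              (ENNReal.ofReal_toReal (hHbne _)).symm
          _ ≤ ENNReal.ofReal ((hE p.2).toReal * (Hb x).toReal) :=
              ENNReal.ofReal_le_ofReal hr
          _ = ENNReal.ofReal (hE p.2).toReal * ENNReal.ofReal (Hb x).toReal :=
              ENNReal.ofReal_mul ENNReal.toReal_nonneg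
          _ = hE p.2 * Hb x := by
              rw [ENNReal.ofReal_toReal (hEne p.2 hp), ENNReal.ofReal_toReal (hHbne x)]
      · have hset : Prod.mk p ⁻¹' {r : (ℝ × ℝ) × (ℝ × ℝ) |
            x < r.1.1 * r.1.2 ∧ x < r.2.1 * r.2.2 * r.1.2} = (∅ : Set (ℝ × ℝ)) := by
          ext q
          simp only [mem_preimage, mem_setOf_eq, mem_empty_iff_false, iff_false, not_and]
          exact fun h => absurd h hpx
        rw [hset]
        simp
    calc ∫⁻ p, μ₁ (Prod.mk p ⁻¹' {r : (ℝ × ℝ) × (ℝ × ℝ) |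
            x < r.1.1 * r.1.2 ∧ x < r.2.1 * r.2.2 * r.1.2}) ∂μ₁
        ≤ ∫⁻ p, ({p : ℝ × ℝ | x < p.1 * p.2}).indicator (fun p => hE p.2 * Hb x) p ∂μ₁ :=
          lintegral_mono_ae hbound
      _ = ∫⁻ p in {p : ℝ × ℝ | x < p.1 * p.2}, hE p.2 * Hb x ∂μ₁ :=
          lintegral_indicator (hSx x) _
      _ = (∫⁻ p in {p : ℝ × ℝ | x < p.1 * p.2}, hE p.2 ∂μ₁) * Hb x :=
          lintegral_mul_const' (Hb x) _ (hHbne x)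
  -- total integral is finite
  have hItot : ∫⁻ p : ℝ × ℝ, hE p.2 ∂μ₁ < ⊤ := by
    have h2 : μ₁.map Prod.snd = P.map Y₁ := by
      rw [hμ₁def, Measure.map_map measurable_snd hpair₁]
      rfl
    have h1 : ∫⁻ p : ℝ × ℝ, hE p.2 ∂μ₁ = ∫⁻ v, hE v ∂(P.map Y₁) := by
      rw [← h2, lintegral_map hEmeas measurable_snd]
    rw [h1]
    have hae2 : ∀ᵐ v ∂(P.map Y₁), 0 < v :=
      (ae_map_iff hY₁.aemeasurable measurableSet_Ioi).2 (Eventually.of_forall hY₁pos)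
    calc ∫⁻ v, hE v ∂(P.map Y₁) ≤ ∫⁻ v, ENNReal.ofReal (Htilde v) ∂(P.map Y₁) := by
          refine lintegral_mono_ae ?_
          filter_upwards [hae2] with v hv
          exact hEle v hv
      _ < ⊤ := hHtInt
  -- the tail tends to zero
  have hHb0 : Tendsto Hb atTop (𝓝 0) := by
    have hseq : Tendsto (fun n : ℕ => Hb n) atTop (𝓝 0) := by
      have hU := tendsto_measure_iInter_atTop (μ := P)
        (s := fun n : ℕ => {ω | X₁ ω * Y₁ ω > (n : ℝ)})
        (fun n => (hHbSet n).nullMeasurableSet)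
        (fun m n hmn ω h => lt_of_le_of_lt (show (m:ℝ) ≤ n by exact_mod_cast hmn) h)
        ⟨0, measure_ne_top P _⟩
      have hempty : (⋂ n : ℕ, {ω | X₁ ω * Y₁ ω > (n : ℝ)}) = ∅ := by
        ext ω
        simp only [mem_iInter, mem_setOf_eq, mem_empty_iff_false, iff_false, not_forall]
        obtain ⟨n, hn⟩ := exists_nat_gt (X₁ ω * Y₁ ω)
        exact ⟨n, not_lt.2 hn.le⟩
      rw [hempty, measure_empty] at hU
      exact hU
    rw [ENNReal.tendsto_nhds_zero]
    intro ε hε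
    rw [ENNReal.tendsto_nhds_zero] at hseq
    obtain ⟨n, hn⟩ := (hseq ε hε).exists
    filter_upwards [eventually_ge_atTop (n : ℝ)] with x hxn
    exact le_trans (hHbAnti hxn) hn
  -- the truncated integral tends to zero
  have hItend : Tendsto (fun x : ℝ => ∫⁻ p in {p : ℝ × ℝ | x < p.1 * p.2}, hE p.2 ∂μ₁)
      atTop (𝓝 0) := by
    refine tendsto_setLIntegral_zero hItot.ne ?_
    have hcomp : (⇑μ₁ ∘ fun x : ℝ => {p : ℝ × ℝ | x < p.1 * p.2}) = Hb := by
      funext t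
      exact htail t
    rw [hcomp]
    exact hHb0
  -- conclusion
  rw [Asymptotics.isLittleO_iff]
  intro c hc
  have hev : ∀ᶠ x in atTop,
      (∫⁻ p in {p : ℝ × ℝ | x < p.1 * p.2}, hE p.2 ∂μ₁) ≤ ENNReal.ofReal c := by
    rw [ENNReal.tendsto_nhds_zero] at hItend
    exact hItend _ (ENNReal.ofReal_pos.2 hc)
  filter_upwards [hev, eventually_gt_atTop (0 : ℝ)] with x hIx hx
  have hIne : (∫⁻ p in {p : ℝ × ℝ | x < p.1 * p.2}, hE p.2 ∂μ₁) ≠ ⊤ :=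
    ne_top_of_le_ne_top ENNReal.ofReal_ne_top hIx
  have h2 : (P {ω | X₁ ω * Y₁ ω > x ∧ X₂ ω * Y₂ ω * Y₁ ω > x}).toReal
      ≤ (∫⁻ p in {p : ℝ × ℝ | x < p.1 * p.2}, hE p.2 ∂μ₁).toReal * (Hb x).toReal := by
    calc (P {ω | X₁ ω * Y₁ ω > x ∧ X₂ ω * Y₂ ω * Y₁ ω > x}).toReal
        ≤ ((∫⁻ p in {p : ℝ × ℝ | x < p.1 * p.2}, hE p.2 ∂μ₁) * Hb x).toReal :=
          ENNReal.toReal_mono (ENNReal.mul_ne_top hIne (hHbne x)) (hmain x hx)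
      _ = _ := ENNReal.toReal_mul
  have h3 : (∫⁻ p in {p : ℝ × ℝ | x < p.1 * p.2}, hE p.2 ∂μ₁).toReal ≤ c := by
    have h4 := ENNReal.toReal_mono ENNReal.ofReal_ne_top hIx
    rwa [ENNReal.toReal_ofReal hc.le] at h4
  rw [Real.norm_of_nonneg ENNReal.toReal_nonneg, Real.norm_of_nonneg ENNReal.toReal_nonneg]
  calc (P {ω | X₁ ω * Y₁ ω > x ∧ X₂ ω * Y₂ ω * Y₁ ω > x}).toReal
      ≤ (∫⁻ p in {p : ℝ × ℝ | x < p.1 * p.2}, hE p.2 ∂μ₁).toReal * (Hb x).toReal := h2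
    _ ≤ c * (Hb x).toReal :=
        mul_le_mul_of_nonneg_right h3 ENNReal.toReal_nonneg
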